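/- Let F₁ and F₂ be forests of rooted binary X-trees T₁ and T₂. Suppose F₁ is the disjoint union of trees Ṫ₁, …, Ṫ_k and F₂ is the disjoint union of forests Ḟ₁, …, Ḟ_k such that Ṫ_i and Ḟ_i have the same label set for each i. Then a forest of F₂ is an agreement forest of T₁ and T₂ if and only if it is an agreement forest of F₁ and F₂. -/

import Mathlib

namespace Phylo

/-- Rooted binary phylogenetic tree with leaves labelled by `X`. -/
inductive PT (X : Type) where
  | leaf : X → PT X
  | node : PT X → PT X → PT X
deriving DecidableEq

variable {X : Type} [DecidableEq X]

/-- The multiset of leaf labels of a tree. -/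
def labels : PT X → Multiset X
  | .leaf x => {x}
  | .node l r => labels l + labels r

/-- The finite set of leaf labels of a tree. -/
def labs : PT X → Finset X
  | .leaf x => {x}
  | .node l r => labs l ∪ labs r

/-- The multiset of leaf labels of a forest. -/
def labelsF (F : Multiset (PT X)) : Multiset X := (F.map labels).sum

/-- `Sub u t`: `u` occurs as a rooted subtree (i.e. a node) of `t`. -/
inductive Sub : PT X → PT X → Prop
  | refl (t : PT X) : Sub t t
  | left {u l r : PT X} : Sub u l → Sub u (PT.node l r)
  | right {u l r : PT X} : Sub u r → Sub u (PT.node l r)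

/-- Boolean version of `Sub`. -/
def subB : PT X → PT X → Bool
  | u, .leaf x => decide (u = .leaf x)
  | u, .node l r => decide (u = .node l r) || subB u l || subB u r

/-- The finite set of all rooted subtrees (nodes) of a tree. -/
def subtrees : PT X → Finset (PT X)
  | .leaf x => {.leaf x}
  | .node l r => insert (.node l r) (subtrees l ∪ subtrees r)

/-- A node of a forest, identified with the subtree below it. -/
def NodeOf (F : Multiset (PT X)) (u : PT X) : Prop := ∃ C ∈ F, Sub u C

/-- Cut the edges above the subtrees in `E`, suppressing unlabelled nodes with
fewer than two children.  Returns the component containing the root (if any)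
together with the multiset of detached components. -/
def cutAll (E : Finset (PT X)) : PT X → Option (PT X) × Multiset (PT X)
  | .leaf x => (some (.leaf x), 0)
  | .node l r =>
    let pl := cutAll E l
    let pr := cutAll E r
    let lk : Option (PT X) := if l ∈ E then none else pl.1
    let lM : Multiset (PT X) :=
      if l ∈ E then pl.2 + (↑pl.1.toList : Multiset (PT X)) else pl.2
    let rk : Option (PT X) := if r ∈ E then none else pr.1
    let rM : Multiset (PT X) :=
      if r ∈ E then pr.2 + (↑pr.1.toList : Multiset (PT X)) else pr.2
    (match lk, rk with
      | some a, some b => some (.node a b)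
      | some a, none => some a
      | none, some b => some b
      | none, none => none,
     lM + rM)

/-- `F ÷ E`: the forest yielded by deleting the edges in `E` from the forest
`F` (an edge is identified by the subtree hanging below it) and suppressing
unlabelled nodes with fewer than two children. -/
def divF (F : Multiset (PT X)) (E : Finset (PT X)) : Multiset (PT X) :=
  (F.map (fun t => (↑(cutAll E t).1.toList : Multiset (PT X)) + (cutAll E t).2)).sum

/-- `F` is a forest of the forest `G`. -/
def ForestOf (F G : Multiset (PT X)) : Prop := ∃ E : Finset (PT X), divF G E = F

/-- `F` is an agreement forest of the trees `T₁` and `T₂`. -/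
def IsAF (F : Multiset (PT X)) (T₁ T₂ : PT X) : Prop :=
  ForestOf F {T₁} ∧ ForestOf F {T₂}

/-- The minimum number of edges that must be cut in `F` to obtain an
agreement forest of `T₁` and `T₂`. -/
noncomputable def ecut (T₁ T₂ : PT X) (F : Multiset (PT X)) : ℕ :=
  sInf {n | ∃ E : Finset (PT X), E.card = n ∧ IsAF (divF F E) T₁ T₂}

/-- The number of components of a maximum agreement forest. -/
noncomputable def maf (T₁ T₂ : PT X) : ℕ :=
  sInf {n | ∃ F : Multiset (PT X), IsAF F T₁ T₂ ∧ Multiset.card F = n}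

/-- `u` is the smallest subtree of `t` containing all labels in `S`
(the LCA of `S` in `t`). -/
def IsLCA (t : PT X) (S : Finset X) (u : PT X) : Prop :=
  Sub u t ∧ S ⊆ labs u ∧ ∀ v, Sub v u → S ⊆ labs v → v = u

/-- In `t`, the LCA of `S₁` is an ancestor of the LCA of `S₂`. -/
def Anc (t : PT X) (S₁ S₂ : Finset X) : Prop :=
  ∃ u v, IsLCA t S₁ u ∧ IsLCA t S₂ v ∧ Sub v u

/-- In `t`, the LCA of `S₁` is a proper ancestor of the LCA of `S₂`. -/
def PAnc (t : PT X) (S₁ S₂ : Finset X) : Prop :=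
  ∃ u v, IsLCA t S₁ u ∧ IsLCA t S₂ v ∧ Sub v u ∧ v ≠ u

/-- Edge of the cycle graph of an agreement forest of `T₁` and `T₂`:
the root of component `C` maps to an ancestor of the root of `C'`
in `T₁` or in `T₂`. -/
def CEdge (T₁ T₂ : PT X) (C C' : PT X) : Prop :=
  C ≠ C' ∧ (Anc T₁ (labs C) (labs C') ∨ Anc T₂ (labs C) (labs C'))

/-- The cycle graph of `F` (w.r.t. `T₁`, `T₂`) contains a directed cycle. -/
def HasCycle (T₁ T₂ : PT X) (F : Multiset (PT X)) : Prop :=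
  ∃ (C : PT X) (l : List (PT X)), C ∈ F ∧ (∀ D ∈ l, D ∈ F) ∧
    List.Chain (CEdge T₁ T₂) C (l ++ [C])

/-- `F` is an acyclic agreement forest of `T₁` and `T₂`. -/
def IsAAF (F : Multiset (PT X)) (T₁ T₂ : PT X) : Prop :=
  IsAF F T₁ T₂ ∧ ¬ HasCycle T₁ T₂ F

/-- The minimum number of edges that must be cut in `F` to obtain an
acyclic agreement forest of `T₁` and `T₂`. -/
noncomputable def aecut (T₁ T₂ : PT X) (F : Multiset (PT X)) : ℕ :=
  sInf {n | ∃ E : Finset (PT X), E.card = n ∧ IsAAF (divF F E) T₁ T₂}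

/-- The number of components of a maximum acyclic agreement forest. -/
noncomputable def maaf (T₁ T₂ : PT X) : ℕ :=
  sInf {n | ∃ F : Multiset (PT X), IsAAF F T₁ T₂ ∧ Multiset.card F = n}

/-- `a` and `c` are siblings in some component of `F`. -/
def SiblingIn (F : Multiset (PT X)) (a c : PT X) : Prop :=
  ∃ C ∈ F, Sub (PT.node a c) C ∨ Sub (PT.node c a) C

/-- `(a,c)` is a sibling pair of `F₁`: `a` and `c` have a common parent in
`F₁` and both exist in `F₂`. -/
def SiblingPair (F₁ F₂ : Multiset (PT X)) (a c : PT X) : Prop :=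
  SiblingIn F₁ a c ∧ (∃ C ∈ F₂, Sub a C) ∧ (∃ C ∈ F₂, Sub c C)

/-- The nodes `a` and `c` lie in the same component of `F`. -/
def SameComp (F : Multiset (PT X)) (a c : PT X) : Prop :=
  ∃ C ∈ F, Sub a C ∧ Sub c C

/-- The leaves labelled `a` and `b` lie in the same component of `F`. -/
def SameCompLabel (F : Multiset (PT X)) (a b : X) : Prop :=
  ∃ C ∈ F, a ∈ labs C ∧ b ∈ labs C

/-- `ab|c` is a triple of the forest `F`. -/
def IsTriple (F : Multiset (PT X)) (a b c : X) : Prop :=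
  ∃ C ∈ F, ∃ u, Sub u C ∧ a ∈ labs u ∧ b ∈ labs u ∧ c ∈ labs C ∧ c ∉ labs u

/-- `UpChain x m bs`: walking up from node `x` to node `m`, the siblings
encountered (the pendant nodes of the path) are `bs`, in order. -/
inductive UpChain : PT X → PT X → List (PT X) → Prop
  | nil (x : PT X) : UpChain x x []
  | consL {x m b : PT X} {bs : List (PT X)} :
      UpChain (PT.node x b) m bs → UpChain x m (b :: bs)
  | consR {x m b : PT X} {bs : List (PT X)} :
      UpChain (PT.node b x) m bs → UpChain x m (b :: bs)

/-- `CutEdge T R s`: cutting one edge of `T` (and suppressing the resulting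
degree-two node) leaves the tree `R` and detaches the subtree `s`. -/
inductive CutEdge : PT X → PT X → PT X → Prop
  | cutL (l r : PT X) : CutEdge (.node l r) r l
  | cutR (l r : PT X) : CutEdge (.node l r) l r
  | inL {l l' s : PT X} (r : PT X) : CutEdge l l' s → CutEdge (.node l r) (.node l' r) s
  | inR {r r' s : PT X} (l : PT X) : CutEdge r r' s → CutEdge (.node l r) (.node l r') s

/-- `Graft s R T'`: `T'` is obtained from `R` by subdividing an edge of `R`
(or adding a new root) and attaching `s` below the new node. -/
inductive Graft (s : PT X) : PT X → PT X → Prop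
  | here (t : PT X) : Graft s t (.node s t)
  | here' (t : PT X) : Graft s t (.node t s)
  | inL {l l' : PT X} (r : PT X) : Graft s l l' → Graft s (.node l r) (.node l' r)
  | inR {r r' : PT X} (l : PT X) : Graft s r r' → Graft s (.node l r) (.node l r')

/-- A single subtree prune-and-regraft operation. -/
def SprStep (T T' : PT X) : Prop := ∃ R s, CutEdge T R s ∧ Graft s R T'

/-- `n` SPR operations transform the first tree into the second. -/
def SprN : ℕ → PT X → PT X → Prop
  | 0 => fun T T' => T = T'
  | n + 1 => fun T T'' => ∃ T', SprStep T T' ∧ SprN n T' T''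

/-- The SPR distance. -/
noncomputable def dspr (T₁ T₂ : PT X) : ℕ := sInf {n | SprN n T₁ T₂}

/-- The edges on the path from node `v` to the root of the component `C`
(each edge identified by the subtree below it). -/
def pathEdges (C v : PT X) : Finset (PT X) :=
  (subtrees C).filter (fun s => subB v s ∧ s ≠ C)

/-- `HybEdge T ρ F u C`: the expanded cycle graph of `F` has a `T`-hybrid edge
from the node `u` of `F` to the root of the component `C ≠ C_ρ` of `F`;
`u` is the lowest node of `F` whose image in `T` is a proper ancestor of the
image of the root of `C`. -/
def HybEdge (T : PT X) (ρ : X) (F : Multiset (PT X)) (u C : PT X) : Prop :=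
  C ∈ F ∧ ρ ∉ labs C ∧ NodeOf F u ∧ PAnc T (labs u) (labs C) ∧
    ∀ u', NodeOf F u' → PAnc T (labs u') (labs C) → Anc T (labs u') (labs u)

/-- Edge of the expanded cycle graph `ecyc(F)`: either a tree edge of `F`
(directed away from the root) or a hybrid edge. -/
def EcycEdge (T₁ T₂ : PT X) (ρ : X) (F : Multiset (PT X)) (u v : PT X) : Prop :=
  (NodeOf F u ∧ ∃ l r, u = PT.node l r ∧ (v = l ∨ v = r))
  ∨ HybEdge T₁ ρ F u v ∨ HybEdge T₂ ρ F u v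

/-- The expanded cycle graph of `F` contains a directed cycle. -/
def HasCycleE (T₁ T₂ : PT X) (ρ : X) (F : Multiset (PT X)) : Prop :=
  ∃ (u : PT X) (l : List (PT X)), NodeOf F u ∧ (∀ w ∈ l, NodeOf F w) ∧
    List.Chain (EcycEdge T₁ T₂ ρ F) u (l ++ [u])

/-- The set of potential exit nodes of `F`: tails of hybrid edges of
`ecyc(F)`. -/
def pen (T₁ T₂ : PT X) (ρ : X) (F : Multiset (PT X)) : Set (PT X) :=
  {u | ∃ C, HybEdge T₁ ρ F u C ∨ HybEdge T₂ ρ F u C}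

/-- The edge above `s` lies on the path from node `a` up to node `m`. -/
def OnPathUp (a m s : PT X) : Prop := Sub a s ∧ Sub s m ∧ s ≠ m

/-- `a` and `b` are connected in `F − E` (deleting the edges in `E`,
without suppression). -/
def ConnAvoiding (F : Multiset (PT X)) (E : Finset (PT X)) (a b : PT X) : Prop :=
  ∃ C ∈ F, ∃ m, Sub m C ∧ Sub a m ∧ Sub b m ∧
    ∀ s ∈ E, ¬ OnPathUp a m s ∧ ¬ OnPathUp b m s

/-- `v` is an endpoint of the edge above `s` in `F`. -/
def IsEndpoint (F : Multiset (PT X)) (s v : PT X) : Prop :=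
  v = s ∨ (NodeOf F v ∧ ∃ w, v = PT.node s w ∨ v = PT.node w s)

/-- Components `C` and `C'` (of some forest) overlap in the forest `F₁`. -/
def Overlap (F₁ : Multiset (PT X)) (C C' : PT X) : Prop :=
  ∃ a b c d : X, a ∈ labs C ∧ b ∈ labs C ∧ c ∈ labs C' ∧ d ∈ labs C' ∧
    ∃ D ∈ F₁, a ∈ labs D ∧ b ∈ labs D ∧ c ∈ labs D ∧ d ∈ labs D ∧
      ∃ s, Sub s D ∧ s ≠ D ∧
        Xor' (a ∈ labs s) (b ∈ labs s) ∧ Xor' (c ∈ labs s) (d ∈ labs s)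

section AuxAF
set_option linter.unusedSectionVars false
set_option linter.unreachableTactic false
set_option linter.unusedTactic false
set_option maxHeartbeats 1000000
variable {X : Type} [DecidableEq X]

lemma labels_exists (t : PT X) : ∃ x, x ∈ labels t := by
  induction t with
  | leaf x => exact ⟨x, by simp [labels]⟩
  | node l r ih ih' =>
      obtain ⟨x, hx⟩ := ih
      exact ⟨x, by simp [labels, Multiset.mem_add]; exact Or.inl hx⟩

lemma labels_ne_zero (t : PT X) : labels t ≠ 0 := by
  obtain ⟨x, hx⟩ := labels_exists t
  intro h; rw [h] at hx; simp at hx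

lemma sub_le {s t : PT X} (h : Sub s t) : labels s ≤ labels t := by
  induction h with
  | refl => exact le_rfl
  | left h ih => exact ih.trans (by simp [labels])
  | right h ih => exact ih.trans (by simp [labels])

lemma sub_subset {s t : PT X} (h : Sub s t) : labels s ⊆ labels t :=
  Multiset.subset_of_le (sub_le h)

/-- pieces -/
def flatP (q : Option (PT X) × Multiset (PT X)) : Multiset (PT X) :=
  (↑q.1.toList : Multiset (PT X)) + q.2

def combP : Option (PT X) → Option (PT X) → Option (PT X)
  | some a, some b => some (.node a b)
  | some a, none => some a
  | none, some b => some b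
  | none, none => none

def glueP (q q' : Option (PT X) × Multiset (PT X)) : Option (PT X) × Multiset (PT X) :=
  (combP q.1 q'.1, q.2 + q'.2)

def procB (b : Bool) (q : Option (PT X) × Multiset (PT X)) : Option (PT X) × Multiset (PT X) :=
  (if b then none else q.1, if b then q.2 + (↑q.1.toList : Multiset (PT X)) else q.2)

lemma cutAll_node (E : Finset (PT X)) (l r : PT X) :
    cutAll E (PT.node l r) =
      glueP (procB (decide (l ∈ E)) (cutAll E l)) (procB (decide (r ∈ E)) (cutAll E r)) := by
  by_cases hl : l ∈ E <;> by_cases hr : r ∈ E <;>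
    simp [cutAll, glueP, procB, combP, hl, hr]

inductive CutR : PT X → Option (PT X) × Multiset (PT X) → Prop
  | leaf (x : X) : CutR (.leaf x) (some (.leaf x), 0)
  | node {l r : PT X} {p p' : Option (PT X) × Multiset (PT X)} (b b' : Bool) :
      CutR l p → CutR r p' → CutR (.node l r) (glueP (procB b p) (procB b' p'))

lemma cutR_cutAll (E : Finset (PT X)) (t : PT X) : CutR t (cutAll E t) := by
  induction t with
  | leaf x => exact (by simpa [cutAll] using CutR.leaf (X := X) x)
  | node l r ih ih' => rw [cutAll_node]; exact CutR.node _ _ ih ih'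

lemma cut_triv (t : PT X) : CutR t (some t, 0) := by
  induction t with
  | leaf x => exact CutR.leaf x
  | node l r ih ih' =>
      have := CutR.node false false ih ih'
      simpa [glueP, procB, combP] using this

@[simp] lemma flat_procB (b : Bool) (q : Option (PT X) × Multiset (PT X)) :
    flatP (procB b q) = flatP q := by
  cases b <;> cases q <;> simp [flatP, procB, add_comm]

lemma procB_fst (b : Bool) (q : Option (PT X) × Multiset (PT X)) :
    (procB b q).1 = if b then none else q.1 := rfl

@[simp] lemma combP_none_left (o : Option (PT X)) : combP none o = o := by cases o <;> rfl
@[simp] lemma combP_none_right (o : Option (PT X)) : combP o none = o := by cases o <;> rfl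

lemma flat_glue_left_none {q q' : Option (PT X) × Multiset (PT X)} (h : q.1 = none) :
    flatP (glueP q q') = flatP q + flatP q' := by
  cases q with | mk o M => cases q' with | mk o' M' =>
  simp at h; subst h
  cases o' <;> simp [flatP, glueP, combP] <;> abel

lemma flat_glue_right_none {q q' : Option (PT X) × Multiset (PT X)} (h : q'.1 = none) :
    flatP (glueP q q') = flatP q + flatP q' := by
  cases q with | mk o M => cases q' with | mk o' M' =>
  simp at h; subst h
  cases o <;> simp [flatP, glueP, combP] <;> abel

lemma flat_glue_some {q q' : Option (PT X) × Multiset (PT X)} {a b : PT X}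
    (h : q.1 = some a) (h' : q'.1 = some b) :
    flatP (glueP q q') = PT.node a b ::ₘ (q.2 + q'.2) := by
  cases q with | mk o M => cases q' with | mk o' M' =>
  simp at h h'; subst h; subst h'
  simp [flatP, glueP, combP]

lemma labelsF_add (A B : Multiset (PT X)) : labelsF (A + B) = labelsF A + labelsF B := by
  simp [labelsF]

@[simp] lemma labelsF_zero : labelsF (0 : Multiset (PT X)) = 0 := by simp [labelsF]

@[simp] lemma labelsF_cons (t : PT X) (M : Multiset (PT X)) :
    labelsF (t ::ₘ M) = labels t + labelsF M := by simp [labelsF]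

@[simp] lemma labelsF_singleton (t : PT X) : labelsF ({t} : Multiset (PT X)) = labels t := by
  simp [labelsF]

lemma cut_labels {t : PT X} {q : Option (PT X) × Multiset (PT X)} (h : CutR t q) :
    labelsF (flatP q) = labels t := by
  induction h with
  | leaf x => simp [flatP, labelsF, labels]
  | node b b' hl hr ihl ihr =>
      rename_i l r p p'
      have key : ∀ u v : Option (PT X) × Multiset (PT X),
          labelsF (flatP (glueP u v)) = labelsF (flatP u) + labelsF (flatP v) := by
        rintro ⟨o, M⟩ ⟨o', M'⟩
        cases o <;> cases o' <;>
          simp [flatP, glueP, combP, labelsF_add, labels] <;> abel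
      rw [key, flat_procB, flat_procB, ihl, ihr]; rfl

lemma mem_labelsF_le {g : PT X} {M : Multiset (PT X)} (h : g ∈ M) :
    labels g ≤ labelsF M := by
  induction M using Multiset.induction_on with
  | empty => simp at h
  | cons a s ih =>
      rcases Multiset.mem_cons.1 h with h | h
      · subst h; simp
      · exact (ih h).trans (by simp)

lemma piece_le {t : PT X} {q : Option (PT X) × Multiset (PT X)} (h : CutR t q)
    {g : PT X} (hg : g ∈ flatP q) : labels g ≤ labels t :=
  (mem_labelsF_le hg).trans (le_of_eq (cut_labels h))

lemma piece_subset {t : PT X} {q : Option (PT X) × Multiset (PT X)} (h : CutR t q)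
    {g : PT X} (hg : g ∈ flatP q) : labels g ⊆ labels t :=
  Multiset.subset_of_le (piece_le h hg)

lemma root_mem_flat {q : Option (PT X) × Multiset (PT X)} {a : PT X} (h : q.1 = some a) :
    a ∈ flatP q := by
  cases q with | mk o M =>
  simp at h; subst h; simp [flatP]

lemma mem_flat_of_mem_snd {q : Option (PT X) × Multiset (PT X)} {g : PT X} (h : g ∈ q.2) :
    g ∈ flatP q := by
  cases q with | mk o M => simp [flatP, Multiset.mem_add, h]

end AuxAF
section AuxAF2
set_option linter.unusedSectionVars false
set_option linter.deprecated false
variable {X : Type} [DecidableEq X]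

lemma nodup_node {l r : PT X} (h : (labels (PT.node l r)).Nodup) :
    (labels l).Nodup ∧ (labels r).Nodup ∧ Disjoint (labels l) (labels r) := by
  have h2 : labels (PT.node l r) = labels l + labels r := rfl
  rw [h2, Multiset.nodup_add] at h
  exact h

lemma disj_elem {A B C D : Multiset X} (h : Disjoint A B) (h1 : C ≤ A) (h2 : D ≤ B)
    {x : X} (hx : x ∈ C) (hx' : x ∈ D) : False := by
  have := h.mono h1 h2
  exact Multiset.disjoint_left.1 this hx hx'

lemma node_ne_left (l r : PT X) : PT.node l r ≠ l := by
  intro h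
  have h2 := congrArg labels h
  have h3 : labels l + labels r = labels l := h2
  exact labels_ne_zero r (by simpa using h3)

lemma node_ne_right (l r : PT X) : PT.node l r ≠ r := by
  intro h
  have h2 := congrArg labels h
  have h3 : labels l + labels r = labels r := h2
  exact labels_ne_zero l (by simpa [add_comm] using h3)

lemma not_sub_node_left {l r : PT X} (h : Sub (PT.node l r) l) : False := by
  have h2 : labels l + labels r ≤ labels l + 0 := by
    simpa [labels] using sub_le h
  have := le_of_add_le_add_left h2
  exact labels_ne_zero r (le_antisymm (by simpa using this) zero_le)

lemma not_sub_node_right {l r : PT X} (h : Sub (PT.node l r) r) : False := by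
  have h1 : labels l + labels r ≤ labels r := by simpa [labels] using sub_le h
  have h2 : labels r + labels l ≤ labels r + 0 := by
    simpa [add_comm] using h1
  have := le_of_add_le_add_left h2
  exact labels_ne_zero l (le_antisymm (by simpa using this) zero_le)

/-- non-interference: cutAll only depends on membership of proper subtrees. -/
lemma cutAll_congr {E E' : Finset (PT X)} : ∀ {t : PT X},
    (∀ s, Sub s t → s ≠ t → ((s ∈ E) ↔ (s ∈ E'))) → cutAll E t = cutAll E' t := by
  intro t
  induction t with
  | leaf x => intro _; simp [cutAll]
  | node l r ihl ihr =>
      intro h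
      have hl : (l ∈ E) ↔ (l ∈ E') :=
        h l (Sub.left (Sub.refl l)) (fun he => node_ne_left l r he.symm)
      have hr : (r ∈ E) ↔ (r ∈ E') :=
        h r (Sub.right (Sub.refl r)) (fun he => node_ne_right l r he.symm)
      have ihl' : cutAll E l = cutAll E' l := ihl (fun s hs hne =>
        h s (Sub.left hs) (fun he => not_sub_node_left (he ▸ hs)))
      have ihr' : cutAll E r = cutAll E' r := ihr (fun s hs hne =>
        h s (Sub.right hs) (fun he => not_sub_node_right (he ▸ hs)))
      rw [cutAll_node, cutAll_node, ihl', ihr']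
      congr 2 <;> simp [hl, hr]

/-- realization of a semantic cut by an edge set -/
lemma cut_realize {t : PT X} (hnd : (labels t).Nodup) {q : Option (PT X) × Multiset (PT X)}
    (h : CutR t q) : ∃ E : Finset (PT X), (∀ s ∈ E, Sub s t ∧ s ≠ t) ∧ cutAll E t = q := by
  induction h with
  | leaf x => exact ⟨∅, by simp, by simp [cutAll]⟩
  | node b b' hl hr ihl ihr =>
      rename_i l r p p'
      obtain ⟨hndl, hndr, hdisj⟩ := nodup_node hnd
      obtain ⟨El, hEl, hEl2⟩ := ihl hndl
      obtain ⟨Er, hEr, hEr2⟩ := ihr hndr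
      classical
      set E := El ∪ Er ∪ ((if b then {l} else ∅) ∪ (if b' then {r} else ∅)) with hE
      have subl : ∀ s, s ∈ El → Sub s l := fun s hs => (hEl s hs).1
      have subr : ∀ s, s ∈ Er → Sub s r := fun s hs => (hEr s hs).1
      have notsubl : ∀ s, s ∈ Er ∨ s = r → ¬ (Sub s l) := by
        rintro s hs hsub
        have hle : labels s ≤ labels l := sub_le hsub
        have hler : labels s ≤ labels r := by
          rcases hs with hs | hs
          · exact sub_le (subr s hs)
          · subst hs; exact le_rfl
        obtain ⟨x, hx⟩ := labels_exists s
        exact disj_elem hdisj hle hler hx hx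
      have notsubr : ∀ s, s ∈ El ∨ s = l → ¬ (Sub s r) := by
        rintro s hs hsub
        have hle : labels s ≤ labels r := sub_le hsub
        have hlel : labels s ≤ labels l := by
          rcases hs with hs | hs
          · exact sub_le (subl s hs)
          · subst hs; exact le_rfl
        obtain ⟨x, hx⟩ := labels_exists s
        exact disj_elem hdisj hlel hle hx hx
      have hlEl : l ∉ El := fun h => (hEl l h).2 rfl
      have hlEr : l ∉ Er := fun h => notsubl l (Or.inl h) (Sub.refl l)
      have hlr : l ≠ r := fun h => notsubl l (Or.inr h) (Sub.refl l)
      have hrEl : r ∉ El := fun h => notsubr r (Or.inl h) (Sub.refl r)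
      have hrEr : r ∉ Er := fun h => (hEr r h).2 rfl
      refine ⟨E, ?_, ?_⟩
      · intro s hs
        simp only [hE, Finset.mem_union] at hs
        rcases hs with (hs | hs) | (hs | hs)
        · exact ⟨Sub.left (subl s hs), fun he => not_sub_node_left (he ▸ subl s hs)⟩
        · exact ⟨Sub.right (subr s hs), fun he => not_sub_node_right (he ▸ subr s hs)⟩
        · have : s = l := by
            by_cases hb : b
            · simpa [hb] using hs
            · simp [hb] at hs
          subst this
          exact ⟨Sub.left (Sub.refl s), fun he => node_ne_left s r he.symm⟩
        · have : s = r := by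
            by_cases hb : b'
            · simpa [hb] using hs
            · simp [hb] at hs
          subst this
          exact ⟨Sub.right (Sub.refl s), fun he => node_ne_right l s he.symm⟩
      · have hmeml : (l ∈ E) = (b : Prop) := by
          by_cases hb : b <;> by_cases hb' : b' <;>
            simp [hE, Finset.mem_union, hb, hb', hlEl, hlEr, hlr]
        have hmemr : (r ∈ E) = (b' : Prop) := by
          by_cases hb : b <;> by_cases hb' : b' <;>
            simp [hE, Finset.mem_union, hb, hb', hrEl, hrEr, hlr.symm]
        have cl : cutAll E l = p := by
          rw [← hEl2]
          apply cutAll_congr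
          intro s hs hne
          have h1 : s ∉ Er := fun h => notsubl s (Or.inl h) hs
          have h2 : s ≠ r := fun h => notsubl s (Or.inr h) hs
          by_cases hb : b <;> by_cases hb' : b' <;>
            simp [hE, Finset.mem_union, hb, hb', h1, h2, hne]
        have cr : cutAll E r = p' := by
          rw [← hEr2]
          apply cutAll_congr
          intro s hs hne
          have h1 : s ∉ El := fun h => notsubr s (Or.inl h) hs
          have h2 : s ≠ l := fun h => notsubr s (Or.inr h) hs
          by_cases hb : b <;> by_cases hb' : b' <;>
            simp [hE, Finset.mem_union, hb, hb', h1, h2, hne]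
        rw [cutAll_node, cl, cr]
        have e1 : decide (l ∈ E) = b := by simp only [hmeml]; simp
        have e2 : decide (r ∈ E) = b' := by simp only [hmemr]; simp
        rw [e1, e2]
end AuxAF2
section AuxAF3
set_option linter.unusedSectionVars false
set_option maxHeartbeats 1000000
variable {X : Type} [DecidableEq X]

def PP (t : PT X) (g : Multiset (PT X)) : Prop := ∃ q, CutR t q ∧ flatP q = g

def SemF (F G : Multiset (PT X)) : Prop := ∃ Gs, Multiset.Rel PP F Gs ∧ G = Gs.sum

lemma divF_eq (F : Multiset (PT X)) (E : Finset (PT X)) :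
    divF F E = (F.map (fun t => flatP (cutAll E t))).sum := rfl

lemma divF_cons (t : PT X) (F : Multiset (PT X)) (E : Finset (PT X)) :
    divF (t ::ₘ F) E = flatP (cutAll E t) + divF F E := by
  simp [divF_eq]

lemma rel_map_self {P : PT X → Multiset (PT X) → Prop} {F : Multiset (PT X)}
    (f : PT X → Multiset (PT X)) (h : ∀ t ∈ F, P t (f t)) :
    Multiset.Rel P F (F.map f) := by
  induction F using Multiset.induction_on with
  | empty => simp [Multiset.Rel.zero]
  | cons a s ih =>
      rw [Multiset.map_cons]
      exact Multiset.Rel.cons (h a (Multiset.mem_cons_self a s))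
        (ih (fun t ht => h t (Multiset.mem_cons_of_mem ht)))

lemma semF_of_forestOf {F G : Multiset (PT X)} (h : ForestOf G F) : SemF F G := by
  obtain ⟨E, hE⟩ := h
  exact ⟨F.map (fun t => flatP (cutAll E t)),
    rel_map_self _ (fun t _ => ⟨cutAll E t, cutR_cutAll E t, rfl⟩),
    by rw [← hE, divF_eq]⟩

lemma divF_congr {F : Multiset (PT X)} {E E' : Finset (PT X)}
    (h : ∀ D ∈ F, cutAll E D = cutAll E' D) : divF F E = divF F E' := by
  rw [divF_eq, divF_eq]
  congr 1
  exact Multiset.map_congr rfl (fun D hD => by rw [h D hD])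

lemma forestOf_of_semF_aux {F : Multiset (PT X)} {Gs : Multiset (Multiset (PT X))}
    (hrel : Multiset.Rel PP F Gs) (hnd : (labelsF F).Nodup) :
    ∃ E : Finset (PT X), (∀ s ∈ E, ∃ D ∈ F, Sub s D ∧ s ≠ D) ∧ divF F E = Gs.sum := by
  induction hrel with
  | zero => exact ⟨∅, by simp, by simp [divF_eq]⟩
  | @cons t g F₀ Gs₀ hPP hrel ih =>
      rw [labelsF_cons, Multiset.nodup_add] at hnd
      obtain ⟨hnd1, hnd2, hdisj⟩ := hnd
      obtain ⟨q, hq, hflat⟩ := hPP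
      obtain ⟨Et, hEt, hEt2⟩ := cut_realize hnd1 hq
      obtain ⟨E₀, hE₀, hE₀2⟩ := ih hnd2
      classical
      refine ⟨Et ∪ E₀, ?_, ?_⟩
      · intro s hs
        rcases Finset.mem_union.1 hs with hs | hs
        · exact ⟨t, Multiset.mem_cons_self t F₀, hEt s hs⟩
        · obtain ⟨D, hD, hD2⟩ := hE₀ s hs
          exact ⟨D, Multiset.mem_cons_of_mem hD, hD2⟩
      · rw [divF_cons]
        have c1 : cutAll (Et ∪ E₀) t = q := by
          rw [← hEt2]
          apply cutAll_congr
          intro s hs hne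
          constructor
          · intro hmem
            rcases Finset.mem_union.1 hmem with h | h
            · exact h
            · exfalso
              obtain ⟨D, hD, hsD, _⟩ := hE₀ s h
              obtain ⟨x, hx⟩ := labels_exists s
              exact disj_elem hdisj (sub_le hs) ((sub_le hsD).trans (mem_labelsF_le hD)) hx hx
          · intro hmem; exact Finset.mem_union_left _ hmem
        have c2 : divF F₀ (Et ∪ E₀) = divF F₀ E₀ := by
          apply divF_congr
          intro D hD
          apply cutAll_congr
          intro s hs hne
          constructor
          · intro hmem
            rcases Finset.mem_union.1 hmem with h | h
            · exfalso
              obtain ⟨x, hx⟩ := labels_exists s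
              exact disj_elem hdisj ((sub_le (hEt s h).1))
                ((sub_le hs).trans (mem_labelsF_le hD)) hx hx
            · exact h
          · intro hmem; exact Finset.mem_union_right _ hmem
        rw [c1, c2, hE₀2, hflat, Multiset.sum_cons]

lemma forestOf_of_semF {F G : Multiset (PT X)} (hnd : (labelsF F).Nodup) (h : SemF F G) :
    ForestOf G F := by
  obtain ⟨Gs, hrel, hG⟩ := h
  obtain ⟨E, _, hE⟩ := forestOf_of_semF_aux hrel hnd
  exact ⟨E, by rw [hE, hG]⟩

end AuxAF3
section AuxAF4
set_option linter.unusedSectionVars false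
set_option maxHeartbeats 1000000
variable {X : Type} [DecidableEq X]

def MStepR (F F' : Multiset (PT X)) : Prop :=
  ∃ C R s rest, CutEdge C R s ∧ F = C ::ₘ rest ∧ F' = R ::ₘ s ::ₘ rest

def MStepsR (F F' : Multiset (PT X)) : Prop := Relation.ReflTransGen MStepR F F'

lemma mstep_add {F F' H : Multiset (PT X)} (h : MStepR F F') : MStepR (F + H) (F' + H) := by
  obtain ⟨C, R, s, rest, hce, h1, h2⟩ := h
  exact ⟨C, R, s, rest + H, hce, by rw [h1, Multiset.cons_add],
    by rw [h2, Multiset.cons_add, Multiset.cons_add]⟩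

lemma msteps_add {F F' H : Multiset (PT X)} (h : MStepsR F F') : MStepsR (F + H) (F' + H) := by
  induction h with
  | refl => exact Relation.ReflTransGen.refl
  | tail _ hstep ih => exact Relation.ReflTransGen.tail ih (mstep_add hstep)

lemma msteps_pair {A A' B B' : Multiset (PT X)} (h : MStepsR A A') (h' : MStepsR B B') :
    MStepsR (A + B) (A' + B') := by
  refine Relation.ReflTransGen.trans (msteps_add h) ?_
  rw [add_comm A' B, add_comm A' B']
  exact msteps_add h'

inductive RS : PT X → PT X → Multiset (PT X) → Prop
  | refl (t : PT X) : RS t t 0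
  | step {t t' s a : PT X} {M : Multiset (PT X)} :
      CutEdge t t' s → RS t' a M → RS t a (s ::ₘ M)

lemma RS_congL {l a : PT X} {M : Multiset (PT X)} (h : RS l a M) (r : PT X) :
    RS (PT.node l r) (PT.node a r) M := by
  induction h with
  | refl => exact RS.refl _
  | step hce _ ih => exact RS.step (CutEdge.inL r hce) ih

lemma RS_congR {r a : PT X} {M : Multiset (PT X)} (h : RS r a M) (l : PT X) :
    RS (PT.node l r) (PT.node l a) M := by
  induction h with
  | refl => exact RS.refl _
  | step hce _ ih => exact RS.step (CutEdge.inR l hce) ih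

lemma RS_trans {t b c : PT X} {M N : Multiset (PT X)} (h : RS t b M) (h' : RS b c N) :
    RS t c (M + N) := by
  induction h with
  | refl => simpa using h'
  | step hce _ ih => rw [Multiset.cons_add]; exact RS.step hce (ih h')

lemma RS_single {t t' s : PT X} (h : CutEdge t t' s) : RS t t' {s} :=
  RS.step h (RS.refl t')

lemma RS_msteps {t a : PT X} {M : Multiset (PT X)} (h : RS t a M) :
    MStepsR {t} (a ::ₘ M) := by
  induction h with
  | refl => exact Relation.ReflTransGen.refl
  | @step t t' s a M hce _ ih =>
      have h1 : MStepR {t} ({t'} + {s}) :=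
        ⟨t, t', s, 0, hce, rfl, by simp [Multiset.singleton_add]⟩
      have h2 : MStepsR ({t'} + {s}) ((a ::ₘ M) + {s}) := msteps_add ih
      have h3 : (a ::ₘ M) + {s} = a ::ₘ s ::ₘ M := by
        rw [Multiset.cons_add, add_comm, Multiset.singleton_add]
      rw [← h3]
      exact Relation.ReflTransGen.head h1 h2

@[simp] lemma procB_false (p : Option (PT X) × Multiset (PT X)) : procB false p = p := by
  cases p; simp [procB]

lemma procB_some {b : Bool} {p : Option (PT X) × Multiset (PT X)} {a : PT X}
    (h : (procB b p).1 = some a) : procB b p = p ∧ p.1 = some a := by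
  cases b
  · simp at h; exact ⟨by simp, h⟩
  · simp [procB] at h

lemma sideL {l : PT X} {p : Option (PT X) × Multiset (PT X)} (b : Bool)
    (root : ∀ a, p.1 = some a → RS l a p.2)
    (dis : p.1 = none → ∀ z, RS (PT.node l z) z p.2 ∧ RS (PT.node z l) z p.2)
    (hnone : (procB b p).1 = none) :
    ∀ z, RS (PT.node l z) z ((procB b p).2) ∧ RS (PT.node z l) z ((procB b p).2) := by
  intro z
  cases b with
  | false =>
      simp at hnone ⊢
      exact dis hnone z
  | true =>
      cases hp : p.1 with
      | none =>
          have h2 : (procB true p).2 = p.2 := by simp [procB, hp]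
          rw [h2]; exact dis hp z
      | some w =>
          have h2 : (procB true p).2 = p.2 + {w} := by simp [procB, hp]
          rw [h2]
          constructor
          · exact RS_trans (RS_congL (root w hp) z) (RS_single (CutEdge.cutL w z))
          · exact RS_trans (RS_congR (root w hp) z) (RS_single (CutEdge.cutR z w))

lemma cut_rs {t : PT X} {q : Option (PT X) × Multiset (PT X)} (h : CutR t q) :
    (∀ a, q.1 = some a → RS t a q.2) ∧
    (q.1 = none → ∀ z, RS (PT.node t z) z q.2 ∧ RS (PT.node z t) z q.2) := by
  induction h with
  | leaf x =>
      constructor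
      · intro a ha
        simp at ha
        subst ha; exact RS.refl _
      · intro h; simp at h
  | @node l r p p' b b' hl hr ihl ihr =>
      set u := procB b p with hu'
      set v := procB b' p' with hv'
      have rootl : ∀ a, u.1 = some a → RS l a u.2 := by
        intro a ha
        obtain ⟨he, hp⟩ := procB_some ha
        rw [hu', he]; exact ihl.1 a hp
      have rootr : ∀ a, v.1 = some a → RS r a v.2 := by
        intro a ha
        obtain ⟨he, hp⟩ := procB_some ha
        rw [hv', he]; exact ihr.1 a hp
      have sidel := sideL b ihl.1 ihl.2
      have sider := sideL b' ihr.1 ihr.2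
      constructor
      · intro a ha
        have hq1 : (glueP u v).1 = combP u.1 v.1 := rfl
        have hq2 : (glueP u v).2 = u.2 + v.2 := rfl
        rw [hq1] at ha
        rw [hq2]
        cases hu : u.1 with
        | some a₁ =>
            cases hv : v.1 with
            | some a₂ =>
                rw [hu, hv] at ha
                have : a = PT.node a₁ a₂ := by simpa [combP] using ha.symm
                subst this
                exact RS_trans (RS_congL (rootl a₁ hu) r) (RS_congR (rootr a₂ hv) a₁)
            | none =>
                rw [hu, hv] at ha
                have : a = a₁ := by simpa [combP] using ha.symm
                subst this
                exact RS_trans (RS_congL (rootl a hu) r) ((sider hv a).2)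
        | none =>
            cases hv : v.1 with
            | some a₂ =>
                rw [hu, hv] at ha
                have : a = a₂ := by simpa [combP] using ha.symm
                subst this
                exact RS_trans ((sidel hu r).1) (rootr a hv)
            | none => rw [hu, hv] at ha; simp [combP] at ha
      · intro h0 z
        have hq2 : (glueP u v).2 = u.2 + v.2 := rfl
        have hq1 : (glueP u v).1 = combP u.1 v.1 := rfl
        rw [hq1] at h0
        have hboth : u.1 = none ∧ v.1 = none := by
          cases hu : u.1 <;> cases hv : v.1 <;> rw [hu, hv] at h0 <;>
            simp [combP] at h0 <;> simp
        rw [hq2]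
        constructor
        · exact RS_trans (RS_congL ((sidel hboth.1 r).1) z) ((sider hboth.2 z).1)
        · exact RS_trans (RS_congR ((sidel hboth.1 r).1) z) ((sider hboth.2 z).2)

lemma flat_some {q : Option (PT X) × Multiset (PT X)} {a : PT X} (h : q.1 = some a) :
    flatP q = a ::ₘ q.2 := by
  cases q with | mk o M =>
  simp at h; subst h; simp [flatP]

lemma flat_none {q : Option (PT X) × Multiset (PT X)} (h : q.1 = none) :
    flatP q = q.2 := by
  cases q with | mk o M =>
  simp at h; subst h; simp [flatP]

lemma cut_msteps {t : PT X} {q : Option (PT X) × Multiset (PT X)} (h : CutR t q) :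
    MStepsR {t} (flatP q) := by
  induction h with
  | leaf x =>
      have : flatP ((some (PT.leaf x) : Option (PT X)), (0 : Multiset (PT X)))
          = {PT.leaf x} := by simp [flatP]
      rw [this]; exact Relation.ReflTransGen.refl
  | @node l r p p' b b' hl hr ihl ihr =>
      set u := procB b p with hu'
      set v := procB b' p' with hv'
      cases hc : (glueP u v).1 with
      | some a =>
          have := RS_msteps ((cut_rs (CutR.node b b' hl hr)).1 a hc)
          rwa [← flat_some hc] at this
      | none =>
          have hq1 : (glueP u v).1 = combP u.1 v.1 := rfl
          rw [hq1] at hc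
          have hboth : u.1 = none ∧ v.1 = none := by
            cases hu : u.1 <;> cases hv : v.1 <;> rw [hu, hv] at hc <;>
              simp [combP] at hc <;> simp
          have hflat : flatP (glueP u v) = flatP p' + flatP p := by
            rw [flat_none (show (glueP u v).1 = none by rw [hq1, hboth.1, hboth.2]; rfl)]
            have e1 : u.2 = flatP p := by
              rw [← flat_procB b p, ← hu', flat_none hboth.1]
            have e2 : v.2 = flatP p' := by
              rw [← flat_procB b' p', ← hv', flat_none hboth.2]
            have : (glueP u v).2 = u.2 + v.2 := rfl
            rw [this, e1, e2, add_comm]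
          rw [hflat]
          have h1 : MStepR {PT.node l r} ({r} + {l}) :=
            ⟨PT.node l r, r, l, 0, CutEdge.cutL l r, rfl, by simp [Multiset.singleton_add]⟩
          exact Relation.ReflTransGen.head h1 (msteps_pair ihr ihl)

end AuxAF4
section AuxAF5
set_option linter.unusedSectionVars false
set_option maxHeartbeats 1000000
variable {X : Type} [DecidableEq X]

lemma msteps_factor {F G : Multiset (PT X)} (h : MStepsR F G) :
    ∃ Gs, Multiset.Rel (fun t g => MStepsR {t} g) F Gs ∧ G = Gs.sum := by
  induction h using Relation.ReflTransGen.head_induction_on with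
  | refl =>
      refine ⟨G.map (fun t => {t}), rel_map_self _ (fun t _ => Relation.ReflTransGen.refl), ?_⟩
      simp
  | head hstep _ ih =>
      obtain ⟨Gs, hrel, hG⟩ := ih
      obtain ⟨C, R, s, rest, hce, h1, h2⟩ := hstep
      rw [h2] at hrel
      rw [Multiset.rel_cons_left] at hrel
      obtain ⟨gR, Gs1, hgR, hrel1, hGs1⟩ := hrel
      rw [Multiset.rel_cons_left] at hrel1
      obtain ⟨gs, Gs2, hgs, hrel2, hGs2⟩ := hrel1
      refine ⟨(gR + gs) ::ₘ Gs2, ?_, ?_⟩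
      · rw [h1]
        refine Multiset.Rel.cons ?_ hrel2
        have hC : MStepR {C} ({R} + {s}) :=
          ⟨C, R, s, 0, hce, rfl, by simp [Multiset.singleton_add]⟩
        exact Relation.ReflTransGen.head hC (msteps_pair hgR hgs)
      · rw [hG, hGs1, hGs2]
        simp [Multiset.sum_cons, add_assoc]

lemma labels_cutEdge {C R s : PT X} (h : CutEdge C R s) :
    labels R + labels s = labels C := by
  induction h with
  | cutL l r => show labels r + labels l = labels l + labels r; rw [add_comm]
  | cutR l r => rfl
  | inL r _ ih =>
      show (labels _ + labels r) + labels _ = labels _ + labels r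
      rw [add_right_comm, ih]
  | inR l _ ih =>
      show (labels l + labels _) + labels _ = labels l + labels _
      rw [add_assoc, ih]

lemma cutEdge_cut {C R s : PT X} (h : CutEdge C R s) : CutR C (some R, {s}) := by
  induction h with
  | cutL l r =>
      have := CutR.node true false (cut_triv l) (cut_triv r)
      simpa [glueP, procB, combP] using this
  | cutR l r =>
      have := CutR.node false true (cut_triv l) (cut_triv r)
      simpa [glueP, procB, combP] using this
  | inL r _ ih =>
      rename_i l l' s'
      have := CutR.node false false ih (cut_triv r)
      simpa [glueP, procB, combP] using this
  | inR l _ ih =>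
      rename_i r r' s'
      have := CutR.node false false (cut_triv l) ih
      simpa [glueP, procB, combP] using this

lemma procB_shift (b : Bool) (p : Option (PT X) × Multiset (PT X)) (W : Multiset (PT X)) :
    procB b (p.1, p.2 + W) = ((procB b p).1, (procB b p).2 + W) := by
  cases b <;> simp [procB, add_right_comm]

lemma cutEdge_comp {t R s : PT X} (h : CutEdge t R s) :
    ∀ {p qs : Option (PT X) × Multiset (PT X)}, CutR R p → CutR s qs →
      CutR t (p.1, p.2 + flatP qs) := by
  induction h with
  | cutL l r =>
      intro p qs hp hqs
      have := CutR.node true false hqs hp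
      have he : glueP (procB true qs) (procB false p) = (p.1, p.2 + flatP qs) := by
        cases p with | mk o M => cases qs with | mk o' M' =>
        cases o <;> (simp [glueP, procB, combP, flatP]; abel)
      rwa [he] at this
  | cutR l r =>
      intro p qs hp hqs
      have := CutR.node false true hp hqs
      have he : glueP (procB false p) (procB true qs) = (p.1, p.2 + flatP qs) := by
        cases p with | mk o M => cases qs with | mk o' M' =>
        cases o <;> (simp [glueP, procB, combP, flatP]; abel)
      rwa [he] at this
  | @inL l l' s' r _ ih =>
      intro p qs hp hqs
      cases hp with
      | node b b' h1 h2 =>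
          rename_i p₁ p₂
          have key := CutR.node (l := l) (r := r) b b' (ih h1 hqs) h2
          rw [procB_shift] at key
          have he : glueP ((procB b p₁).1, (procB b p₁).2 + flatP qs) (procB b' p₂)
              = ((glueP (procB b p₁) (procB b' p₂)).1,
                 (glueP (procB b p₁) (procB b' p₂)).2 + flatP qs) := by
            simp [glueP, add_right_comm]
          rwa [he] at key
  | @inR r r' s' l _ ih =>
      intro p qs hp hqs
      cases hp with
      | node b b' h1 h2 =>
          rename_i p₁ p₂
          have key := CutR.node (l := l) (r := r) b b' h1 (ih h2 hqs)
          rw [procB_shift] at key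
          have he : glueP (procB b p₁) ((procB b' p₂).1, (procB b' p₂).2 + flatP qs)
              = ((glueP (procB b p₁) (procB b' p₂)).1,
                 (glueP (procB b p₁) (procB b' p₂)).2 + flatP qs) := by
            simp [glueP, add_assoc]
          rwa [he] at key

def szP : PT X → ℕ
  | .leaf _ => 1
  | .node l r => szP l + szP r + 1

lemma cutEdge_sz {t R s : PT X} (h : CutEdge t R s) : szP R < szP t ∧ szP s < szP t := by
  induction h with
  | cutL l r => exact ⟨by simp [szP], by simp [szP]⟩
  | cutR l r => exact ⟨by simp [szP], by simp [szP]⟩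
  | inL r _ ih => simp [szP] at ih ⊢; omega
  | inR l _ ih => simp [szP] at ih ⊢; omega

lemma msteps_cut_aux : ∀ (n : ℕ) (t : PT X) (G : Multiset (PT X)), szP t ≤ n →
    MStepsR {t} G → ∃ q, CutR t q ∧ flatP q = G := by
  intro n
  induction n with
  | zero =>
      intro t G hsz
      cases t <;> simp [szP] at hsz
  | succ n ih =>
      intro t G hsz h
      rcases Relation.ReflTransGen.cases_head h with heq | ⟨F₀, hstep, hrest⟩
      · exact ⟨(some t, 0), cut_triv t, by rw [← heq]; simp [flatP]⟩
      · obtain ⟨C, R, s, rest, hce, h1, h2⟩ := hstep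
        have hrest0 : rest = 0 := by
          have hcard := congrArg Multiset.card h1
          simp at hcard
          exact hcard
        subst hrest0
        have hCt : C = t := by
          have : ({t} : Multiset (PT X)) = {C} := h1
          exact (Multiset.singleton_inj.1 this).symm
        subst hCt
        rw [h2] at hrest
        obtain ⟨Gs, hrel, hG⟩ := msteps_factor hrest
        rw [Multiset.rel_cons_left] at hrel
        obtain ⟨gR, Gs1, hgR, hrel1, hGs1⟩ := hrel
        rw [Multiset.rel_cons_left] at hrel1
        obtain ⟨gs, Gs2, hgs, hrel2, hGs2⟩ := hrel1
        rw [Multiset.rel_zero_left] at hrel2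
        subst hrel2
        obtain ⟨hszR, hszs⟩ := cutEdge_sz hce
        obtain ⟨qR, hqR, hflatR⟩ := ih R gR (by omega) hgR
        obtain ⟨qs, hqs, hflats⟩ := ih s gs (by omega) hgs
        refine ⟨(qR.1, qR.2 + flatP qs), cutEdge_comp hce hqR hqs, ?_⟩
        have : flatP (qR.1, qR.2 + flatP qs) = flatP qR + flatP qs := by
          cases qR with | mk o M => simp [flatP, add_assoc]
        rw [this, hflatR, hflats, hG, hGs1, hGs2]
        simp

end AuxAF5
section AuxAF6
set_option linter.unusedSectionVars false
set_option maxHeartbeats 2000000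
variable {X : Type} [DecidableEq X]

@[simp] lemma combP_some_some (a b : PT X) :
    combP (some a) (some b) = some (PT.node a b) := rfl
@[simp] lemma glueP_fst (u v : Option (PT X) × Multiset (PT X)) :
    (glueP u v).1 = combP u.1 v.1 := rfl
@[simp] lemma glueP_snd (u v : Option (PT X) × Multiset (PT X)) :
    (glueP u v).2 = u.2 + v.2 := rfl

lemma labels_node (l r : PT X) : labels (PT.node l r) = labels l + labels r := rfl

lemma root_subset {t : PT X} {q : Option (PT X) × Multiset (PT X)} (h : CutR t q)
    {a : PT X} (ha : q.1 = some a) : labels a ⊆ labels t :=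
  piece_subset h (root_mem_flat ha)

lemma mem_procB_snd {b : Bool} {p : Option (PT X) × Multiset (PT X)} {g : PT X}
    (h : g ∈ p.2) : g ∈ (procB b p).2 := by
  cases b <;> simp [procB, Multiset.mem_add, h]

lemma root_mem_procB_snd {p : Option (PT X) × Multiset (PT X)} {a : PT X}
    (h : p.1 = some a) : a ∈ (procB true p).2 := by
  cases p with | mk o M =>
  simp at h; subst h; simp [procB]

lemma not_subset_exists {A B : Multiset X} (h : ¬ A ⊆ B) : ∃ x ∈ A, x ∉ B := by
  by_contra hc
  push_neg at hc
  exact h (fun x hx => hc x hx)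

lemma crux {t R s : PT X} (hce : CutEdge t R s) :
    ∀ (_ : (labels t).Nodup) (q : Option (PT X) × Multiset (PT X)), CutR t q →
    (∀ g ∈ q.2, labels g ⊆ labels R ∨ labels g ⊆ labels s) →
    (∃ a, q.1 = some a ∧ ¬(labels a ⊆ labels R) ∧ ¬(labels a ⊆ labels s))
    ∨ ∃ qR qs, CutR R qR ∧ CutR s qs ∧ flatP q = flatP qR + flatP qs ∧
        (∀ a, q.1 = some a → qR.1 = some a ∨ labels a ⊆ labels s) := by
  induction hce with
  | cutL l r =>
      -- t = node l r, R = r, s = l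
      intro hnd q hq hfit
      obtain ⟨hndl, hndr, hdisj⟩ := nodup_node hnd
      cases hq with
      | @node _ _ p p' b b' h1 h2 =>
        cases hu : (procB b p).1 with
        | some a₁ =>
            obtain ⟨hup, hp1⟩ := procB_some hu
            cases hv : (procB b' p').1 with
            | some a₂ =>
                obtain ⟨hvp, hp'1⟩ := procB_some hv
                left
                refine ⟨PT.node a₁ a₂, by simp [hu, hv], ?_, ?_⟩
                · intro hsubs
                  obtain ⟨x, hx⟩ := labels_exists a₁
                  have hxl : x ∈ labels l := root_subset h1 hp1 hx
                  have : x ∈ labels r := hsubs (by simp [labels_node, Multiset.mem_add]; exact Or.inl hx)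
                  exact Multiset.disjoint_left.1 hdisj hxl this
                · intro hsubs
                  obtain ⟨x, hx⟩ := labels_exists a₂
                  have hxr : x ∈ labels r := root_subset h2 hp'1 hx
                  have : x ∈ labels l := hsubs (by simp [labels_node, Multiset.mem_add]; exact Or.inr hx)
                  exact Multiset.disjoint_left.1 hdisj this hxr
            | none =>
                right
                refine ⟨p', p, h2, h1, ?_, ?_⟩
                · rw [flat_glue_right_none (by simp [hv]), flat_procB, flat_procB, add_comm]
                · intro a ha
                  simp [hu, hv] at ha
                  subst ha
                  exact Or.inr (root_subset h1 hp1)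
        | none =>
            right
            refine ⟨p', p, h2, h1, ?_, ?_⟩
            · rw [flat_glue_left_none (by simp [hu]), flat_procB, flat_procB, add_comm]
            · intro a ha
              simp [hu] at ha
              cases hv : (procB b' p').1 with
              | some a₂ =>
                  obtain ⟨hvp, hp'1⟩ := procB_some hv
                  rw [hv] at ha
                  simp at ha
                  subst ha
                  exact Or.inl hp'1
              | none => rw [hv] at ha; simp at ha
  | cutR l r =>
      -- t = node l r, R = l, s = r
      intro hnd q hq hfit
      obtain ⟨hndl, hndr, hdisj⟩ := nodup_node hnd
      cases hq with
      | @node _ _ p p' b b' h1 h2 =>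
        cases hu : (procB b p).1 with
        | some a₁ =>
            obtain ⟨hup, hp1⟩ := procB_some hu
            cases hv : (procB b' p').1 with
            | some a₂ =>
                obtain ⟨hvp, hp'1⟩ := procB_some hv
                left
                refine ⟨PT.node a₁ a₂, by simp [hu, hv], ?_, ?_⟩
                · intro hsubs
                  obtain ⟨x, hx⟩ := labels_exists a₂
                  have hxr : x ∈ labels r := root_subset h2 hp'1 hx
                  have : x ∈ labels l := hsubs (by simp [labels_node, Multiset.mem_add]; exact Or.inr hx)
                  exact Multiset.disjoint_left.1 hdisj this hxr
                · intro hsubs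
                  obtain ⟨x, hx⟩ := labels_exists a₁
                  have hxl : x ∈ labels l := root_subset h1 hp1 hx
                  have : x ∈ labels r := hsubs (by simp [labels_node, Multiset.mem_add]; exact Or.inl hx)
                  exact Multiset.disjoint_left.1 hdisj hxl this
            | none =>
                right
                refine ⟨p, p', h1, h2, ?_, ?_⟩
                · rw [flat_glue_right_none (by simp [hv]), flat_procB, flat_procB]
                · intro a ha
                  simp [hu, hv] at ha
                  subst ha
                  exact Or.inl hp1
        | none =>
            right
            refine ⟨p, p', h1, h2, ?_, ?_⟩
            · rw [flat_glue_left_none (by simp [hu]), flat_procB, flat_procB]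
            · intro a ha
              simp [hu] at ha
              cases hv : (procB b' p').1 with
              | some a₂ =>
                  obtain ⟨hvp, hp'1⟩ := procB_some hv
                  rw [hv] at ha
                  simp at ha
                  subst ha
                  exact Or.inr (root_subset h2 hp'1)
              | none => rw [hv] at ha; simp at ha
  | @inL l l' s' r hce' ih =>
      -- t = node l r, R = node l' r, CutEdge l l' s'
      intro hnd q hq hfit
      obtain ⟨hndl, hndr, hdisj⟩ := nodup_node hnd
      have hlab : labels l' + labels s' = labels l := labels_cutEdge hce'
      have hsubl' : labels l' ⊆ labels l := fun x hx => by
        rw [← hlab]; exact Multiset.mem_add.2 (Or.inl hx)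
      have hsubs' : labels s' ⊆ labels l := fun x hx => by
        rw [← hlab]; exact Multiset.mem_add.2 (Or.inr hx)
      have hdisj' : Disjoint (labels l') (labels s') := by
        have := hndl
        rw [← hlab, Multiset.nodup_add] at this
        exact this.2.2
      cases hq with
      | @node _ _ p p' b b' h1 h2 =>
        -- refined fits on inner pieces of p
        have hfitl : ∀ g ∈ p.2, labels g ⊆ labels l' ∨ labels g ⊆ labels s' := by
          intro g hg
          have hgl : labels g ⊆ labels l :=
            piece_subset h1 (mem_flat_of_mem_snd hg)
          rcases hfit g (by simp [Multiset.mem_add]; exact Or.inl (mem_procB_snd hg)) with h | h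
          · left
            intro x hx
            rcases Multiset.mem_add.1 (by rw [← labels_node]; exact h hx : x ∈ labels l' + labels r) with h' | h'
            · exact h'
            · exact absurd h' (Multiset.disjoint_left.1 hdisj (hgl hx))
          · exact Or.inr h
        rcases ih hndl p h1 hfitl with ⟨a, hpa, hna1, hna2⟩ | ⟨ql', qs', hcl, hcs, hflatl, hrootl⟩
        · -- inner bad root a of p
          -- a has a label in s'
          obtain ⟨x, hx, hxnl'⟩ := not_subset_exists hna1
          have hxl : x ∈ labels l := root_subset h1 hpa hx
          have hxs' : x ∈ labels s' := by
            rcases Multiset.mem_add.1 (by rw [hlab]; exact hxl : x ∈ labels l' + labels s') with h | h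
            · exact absurd h hxnl'
            · exact h
          have hxnotR : x ∉ labels (PT.node l' r) := by
            rw [labels_node]
            intro hmem
            rcases Multiset.mem_add.1 hmem with h | h
            · exact hxnl' h
            · exact Multiset.disjoint_left.1 hdisj hxl h
          obtain ⟨y, hy, hyns⟩ := not_subset_exists hna2
          cases hb : b with
          | true =>
              -- a is a detached piece, contradiction with hfit
              have hamem : a ∈ (procB b p).2 := by rw [hb]; exact root_mem_procB_snd hpa
              rcases hfit a (by simp [Multiset.mem_add]; exact Or.inl hamem) with h | h
              · exact absurd (h hx) hxnotR
              · exact absurd (h hy) hyns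
          | false =>
              left
              have hu1 : (procB b p).1 = some a := by rw [hb]; simpa using hpa
              cases hv : (procB b' p').1 with
              | some bb =>
                  refine ⟨PT.node a bb, by simp [hu1, hv, hpa], ?_, ?_⟩
                  · intro hsubs
                    exact hxnotR (hsubs (by simp [labels_node, Multiset.mem_add]; exact Or.inl hx))
                  · intro hsubs
                    exact hyns (hsubs (by simp [labels_node, Multiset.mem_add]; exact Or.inl hy))
              | none =>
                  refine ⟨a, by simp [hu1, hv, hpa], ?_, ?_⟩
                  · intro hsubs; exact hxnotR (hsubs hx)
                  · intro hsubs; exact hyns (hsubs hy)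
        · -- inner good factorisation
          by_cases huno : (procB b p).1 = none
          · -- construction A : sever l' in R
            right
            refine ⟨glueP (procB true ql') (procB b' p'), qs',
              CutR.node true b' hcl h2, hcs, ?_, ?_⟩
            · rw [flat_glue_left_none (by simp [huno]),
                 flat_glue_left_none (by simp [procB]),
                 flat_procB, flat_procB, flat_procB, hflatl]
              abel
            · intro a ha
              left
              rw [glueP_fst, huno, combP_none_left] at ha
              rw [glueP_fst, show (procB true ql').1 = none from rfl, combP_none_left]
              exact ha
          · obtain ⟨a, hu1⟩ := Option.ne_none_iff_exists'.1 huno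
            obtain ⟨hup, hp1⟩ := procB_some hu1
            rcases hrootl a hp1 with hql | hsub
            · -- root preserved in ql'
              right
              refine ⟨glueP (procB false ql') (procB b' p'), qs',
                CutR.node false b' hcl h2, hcs, ?_, ?_⟩
              · cases hv : (procB b' p').1 with
                | none =>
                    rw [flat_glue_right_none (by simp [hv]),
                       flat_glue_right_none (by simp [hv]),
                       flat_procB, flat_procB, flat_procB, hflatl]
                    abel
                | some bb =>
                    rw [flat_glue_some hu1 hv,
                       flat_glue_some (show (procB false ql').1 = some a by simpa using hql) hv]
                    have hp2 : p.2 = ql'.2 + flatP qs' := by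
                      have e1 : flatP p = a ::ₘ p.2 := flat_some hp1
                      have e2 : flatP ql' = a ::ₘ ql'.2 := flat_some hql
                      rw [e1, e2, Multiset.cons_add] at hflatl
                      exact (Multiset.cons_inj_right a).1 hflatl
                    simp only [procB_false]
                    rw [hup, hp2, Multiset.cons_add]
                    congr 1
                    abel
              · intro a' ha'
                left
                rw [glueP_fst, hu1] at ha'
                rw [glueP_fst, show (procB false ql').1 = ql'.1 from rfl, hql]
                exact ha'
            · -- root absorbed into the detached part s'
              cases hv : (procB b' p').1 with
              | some bb =>
                  -- bad root at this level
                  left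
                  obtain ⟨hvp, hp'1⟩ := procB_some hv
                  obtain ⟨x, hx⟩ := labels_exists a
                  have hxs' : x ∈ labels s' := hsub hx
                  have hxl : x ∈ labels l := hsubs' hxs'
                  obtain ⟨y, hy⟩ := labels_exists bb
                  have hyr : y ∈ labels r := root_subset h2 hp'1 hy
                  refine ⟨PT.node a bb, by simp [hu1, hv], ?_, ?_⟩
                  · intro hsubs
                    have : x ∈ labels (PT.node l' r) :=
                      hsubs (by simp [labels_node, Multiset.mem_add]; exact Or.inl hx)
                    rw [labels_node] at this
                    rcases Multiset.mem_add.1 this with h | h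
                    · exact Multiset.disjoint_left.1 hdisj' h hxs'
                    · exact Multiset.disjoint_left.1 hdisj hxl h
                  · intro hsubs
                    have : y ∈ labels s' :=
                      hsubs (by simp [labels_node, Multiset.mem_add]; exact Or.inr hy)
                    exact Multiset.disjoint_left.1 hdisj (hsubs' this) hyr
              | none =>
                  right
                  refine ⟨glueP (procB true ql') (procB b' p'), qs',
                    CutR.node true b' hcl h2, hcs, ?_, ?_⟩
                  · rw [flat_glue_right_none (by simp [hv]),
                       flat_glue_left_none (by simp [procB]),
                       flat_procB, flat_procB, flat_procB, hflatl]
                    abel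
                  · intro a' ha'
                    simp [hu1, hv] at ha'
                    subst ha'
                    exact Or.inr hsub
  | @inR r r' s' l hce' ih =>
      -- t = node l r, R = node l r', CutEdge r r' s'
      intro hnd q hq hfit
      obtain ⟨hndl, hndr, hdisj⟩ := nodup_node hnd
      have hlab : labels r' + labels s' = labels r := labels_cutEdge hce'
      have hsubr' : labels r' ⊆ labels r := fun x hx => by
        rw [← hlab]; exact Multiset.mem_add.2 (Or.inl hx)
      have hsubs' : labels s' ⊆ labels r := fun x hx => by
        rw [← hlab]; exact Multiset.mem_add.2 (Or.inr hx)
      have hdisj' : Disjoint (labels r') (labels s') := by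
        have := hndr
        rw [← hlab, Multiset.nodup_add] at this
        exact this.2.2
      cases hq with
      | @node _ _ p p' b b' h1 h2 =>
        have hfitr : ∀ g ∈ p'.2, labels g ⊆ labels r' ∨ labels g ⊆ labels s' := by
          intro g hg
          have hgr : labels g ⊆ labels r :=
            piece_subset h2 (mem_flat_of_mem_snd hg)
          rcases hfit g (by simp [Multiset.mem_add]; exact Or.inr (mem_procB_snd hg)) with h | h
          · left
            intro x hx
            rcases Multiset.mem_add.1 (by rw [← labels_node]; exact h hx : x ∈ labels l + labels r') with h' | h'
            · exact absurd (hgr hx) (Multiset.disjoint_left.1 hdisj h')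
            · exact h'
          · exact Or.inr h
        rcases ih hndr p' h2 hfitr with ⟨a, hpa, hna1, hna2⟩ | ⟨qr', qs', hcr, hcs, hflatr, hrootr⟩
        · obtain ⟨x, hx, hxnr'⟩ := not_subset_exists hna1
          have hxr : x ∈ labels r := root_subset h2 hpa hx
          have hxs' : x ∈ labels s' := by
            rcases Multiset.mem_add.1 (by rw [hlab]; exact hxr : x ∈ labels r' + labels s') with h | h
            · exact absurd h hxnr'
            · exact h
          have hxnotR : x ∉ labels (PT.node l r') := by
            rw [labels_node]
            intro hmem
            rcases Multiset.mem_add.1 hmem with h | h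
            · exact Multiset.disjoint_left.1 hdisj h hxr
            · exact hxnr' h
          obtain ⟨y, hy, hyns⟩ := not_subset_exists hna2
          cases hb : b' with
          | true =>
              have hamem : a ∈ (procB b' p').2 := by rw [hb]; exact root_mem_procB_snd hpa
              rcases hfit a (by simp [Multiset.mem_add]; exact Or.inr hamem) with h | h
              · exact absurd (h hx) hxnotR
              · exact absurd (h hy) hyns
          | false =>
              left
              have hv1 : (procB b' p').1 = some a := by rw [hb]; simpa using hpa
              cases hu : (procB b p).1 with
              | some aa =>
                  refine ⟨PT.node aa a, by simp [hu, hv1, hpa], ?_, ?_⟩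
                  · intro hsubs
                    exact hxnotR (hsubs (by simp [labels_node, Multiset.mem_add]; exact Or.inr hx))
                  · intro hsubs
                    exact hyns (hsubs (by simp [labels_node, Multiset.mem_add]; exact Or.inr hy))
              | none =>
                  refine ⟨a, by simp [hu, hv1, hpa], ?_, ?_⟩
                  · intro hsubs; exact hxnotR (hsubs hx)
                  · intro hsubs; exact hyns (hsubs hy)
        · by_cases hvno : (procB b' p').1 = none
          · right
            refine ⟨glueP (procB b p) (procB true qr'), qs',
              CutR.node b true h1 hcr, hcs, ?_, ?_⟩
            · rw [flat_glue_right_none (by simp [hvno]),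
                 flat_glue_right_none (by simp [procB]),
                 flat_procB, flat_procB, flat_procB, hflatr]
              abel
            · intro a ha
              left
              rw [glueP_fst, hvno, combP_none_right] at ha
              rw [glueP_fst, show (procB true qr').1 = none from rfl, combP_none_right]
              exact ha
          · obtain ⟨a, hv1⟩ := Option.ne_none_iff_exists'.1 hvno
            obtain ⟨hvp, hp'1⟩ := procB_some hv1
            rcases hrootr a hp'1 with hqr | hsub
            · right
              refine ⟨glueP (procB b p) (procB false qr'), qs',
                CutR.node b false h1 hcr, hcs, ?_, ?_⟩
              · cases hu : (procB b p).1 with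
                | none =>
                    rw [flat_glue_left_none (by simp [hu]),
                       flat_glue_left_none (by simp [hu]),
                       flat_procB, flat_procB, flat_procB, hflatr]
                    abel
                | some aa =>
                    rw [flat_glue_some hu hv1,
                       flat_glue_some hu (show (procB false qr').1 = some a by simpa using hqr)]
                    have hp2 : p'.2 = qr'.2 + flatP qs' := by
                      have e1 : flatP p' = a ::ₘ p'.2 := flat_some hp'1
                      have e2 : flatP qr' = a ::ₘ qr'.2 := flat_some hqr
                      rw [e1, e2, Multiset.cons_add] at hflatr
                      exact (Multiset.cons_inj_right a).1 hflatr
                    simp only [procB_false]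
                    rw [hvp, hp2, Multiset.cons_add]
                    congr 1
                    abel
              · intro a' ha'
                left
                rw [glueP_fst, hv1] at ha'
                rw [glueP_fst, show (procB false qr').1 = qr'.1 from rfl, hqr]
                exact ha'
            · cases hu : (procB b p).1 with
              | some aa =>
                  left
                  obtain ⟨hup, hp1⟩ := procB_some hu
                  obtain ⟨x, hx⟩ := labels_exists a
                  have hxs' : x ∈ labels s' := hsub hx
                  have hxr : x ∈ labels r := hsubs' hxs'
                  obtain ⟨y, hy⟩ := labels_exists aa
                  have hyl : y ∈ labels l := root_subset h1 hp1 hy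
                  refine ⟨PT.node aa a, by simp [hu, hv1], ?_, ?_⟩
                  · intro hsubs
                    have : x ∈ labels (PT.node l r') :=
                      hsubs (by simp [labels_node, Multiset.mem_add]; exact Or.inr hx)
                    rw [labels_node] at this
                    rcases Multiset.mem_add.1 this with h | h
                    · exact Multiset.disjoint_left.1 hdisj h hxr
                    · exact Multiset.disjoint_left.1 hdisj' h hxs'
                  · intro hsubs
                    have : y ∈ labels s' :=
                      hsubs (by simp [labels_node, Multiset.mem_add]; exact Or.inl hy)
                    exact Multiset.disjoint_left.1 hdisj hyl (hsubs' this)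
              | none =>
                  right
                  refine ⟨glueP (procB b p) (procB true qr'), qs',
                    CutR.node b true h1 hcr, hcs, ?_, ?_⟩
                  · rw [flat_glue_left_none (by simp [hu]),
                       flat_glue_right_none (by simp [procB]),
                       flat_procB, flat_procB, flat_procB, hflatr]
                    abel
                  · intro a' ha'
                    simp [hu, hv1] at ha'
                    subst ha'
                    exact Or.inr hsub
end AuxAF6
section AuxAF7
set_option linter.unusedSectionVars false
set_option maxHeartbeats 2000000
variable {X : Type} [DecidableEq X]

lemma mstep_labelsF {F F' : Multiset (PT X)} (h : MStepR F F') : labelsF F' = labelsF F := by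
  obtain ⟨C, R, s, rest, hce, h1, h2⟩ := h
  subst h1; subst h2
  simp only [labelsF_cons]
  rw [← labels_cutEdge hce]
  abel

lemma mstep_refines {F F' : Multiset (PT X)} (h : MStepR F F') :
    ∀ g ∈ F', ∃ D ∈ F, labels g ⊆ labels D := by
  obtain ⟨C, R, s, rest, hce, h1, h2⟩ := h
  subst h1; subst h2
  intro g hg
  have hlab := labels_cutEdge hce
  rcases Multiset.mem_cons.1 hg with rfl | hg
  · exact ⟨C, Multiset.mem_cons_self _ _, fun x hx => by
      rw [← hlab]; exact Multiset.mem_add.2 (Or.inl hx)⟩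
  rcases Multiset.mem_cons.1 hg with rfl | hg
  · exact ⟨C, Multiset.mem_cons_self _ _, fun x hx => by
      rw [← hlab]; exact Multiset.mem_add.2 (Or.inr hx)⟩
  · exact ⟨g, Multiset.mem_cons_of_mem hg, fun x hx => hx⟩

lemma msteps_refines {F F' : Multiset (PT X)} (h : MStepsR F F') :
    ∀ g ∈ F', ∃ D ∈ F, labels g ⊆ labels D := by
  induction h with
  | refl => exact fun g hg => ⟨g, hg, fun x hx => hx⟩
  | tail _ hstep ih =>
      intro g hg
      obtain ⟨D, hD, h1⟩ := mstep_refines hstep g hg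
      obtain ⟨D', hD', h2⟩ := ih D hD
      exact ⟨D', hD', fun x hx => h2 (h1 hx)⟩

lemma step_transport {F F' G : Multiset (PT X)} (hnd : (labelsF F).Nodup)
    (h : MStepR F F') (hsem : SemF F G)
    (href : ∀ g ∈ G, ∃ D ∈ F', labels g ⊆ labels D) : SemF F' G := by
  obtain ⟨C, R, s, rest, hce, h1, h2⟩ := h
  subst h1; subst h2
  obtain ⟨Gs, hrel, hG⟩ := hsem
  rw [Multiset.rel_cons_left] at hrel
  obtain ⟨gC, Gs1, hPP, hrel1, hGs⟩ := hrel
  obtain ⟨q, hq, hflat⟩ := hPP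
  rw [labelsF_cons, Multiset.nodup_add] at hnd
  obtain ⟨hndC, hndrest, hdisj⟩ := hnd
  have hmemG : ∀ g, g ∈ flatP q → g ∈ G := by
    intro g hg
    rw [hG, hGs, Multiset.sum_cons, hflat] at *
    exact Multiset.mem_add.2 (Or.inl (hflat ▸ hg))
  have hRs : ∀ g, g ∈ flatP q → labels g ⊆ labels R ∨ labels g ⊆ labels s := by
    intro g hg
    obtain ⟨D, hD, hsub⟩ := href g (hmemG g hg)
    rcases Multiset.mem_cons.1 hD with rfl | hD
    · exact Or.inl hsub
    rcases Multiset.mem_cons.1 hD with rfl | hD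
    · exact Or.inr hsub
    · exfalso
      obtain ⟨x, hx⟩ := labels_exists g
      have h1 : x ∈ labels C := piece_subset hq hg hx
      have h2 : x ∈ labelsF rest :=
        Multiset.mem_of_le (mem_labelsF_le hD) (hsub hx)
      exact Multiset.disjoint_left.1 hdisj h1 h2
  have hfits : ∀ g ∈ q.2, labels g ⊆ labels R ∨ labels g ⊆ labels s :=
    fun g hg => hRs g (mem_flat_of_mem_snd hg)
  rcases crux hce hndC q hq hfits with ⟨a, ha, hn1, hn2⟩ | ⟨qR, qs, hR, hs, hfl, _⟩
  · exact absurd (hRs a (root_mem_flat ha)) (by tauto)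
  · refine ⟨flatP qR ::ₘ flatP qs ::ₘ Gs1,
      Multiset.Rel.cons ⟨qR, hR, rfl⟩ (Multiset.Rel.cons ⟨qs, hs, rfl⟩ hrel1), ?_⟩
    rw [hG, hGs]
    simp only [Multiset.sum_cons]
    rw [← hflat, hfl]
    abel

lemma msteps_transport {F' G : Multiset (PT X)}
    (href : ∀ g ∈ G, ∃ D ∈ F', labels g ⊆ labels D) :
    ∀ {F}, MStepsR F F' → (labelsF F).Nodup → SemF F G → SemF F' G := by
  intro F h
  induction h using Relation.ReflTransGen.head_induction_on with
  | refl => exact fun _ hsem => hsem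
  | @head F₀ F₁ hstep hrest ih =>
      intro hnd hsem
      have href₁ : ∀ g ∈ G, ∃ D ∈ F₁, labels g ⊆ labels D := by
        intro g hg
        obtain ⟨D, hD, h1⟩ := href g hg
        obtain ⟨D', hD', h2⟩ := msteps_refines hrest D hD
        exact ⟨D', hD', fun x hx => h2 (h1 hx)⟩
      exact ih (by rw [mstep_labelsF hstep]; exact hnd)
        (step_transport hnd hstep hsem href₁)

lemma semF_singleton {T : PT X} {F : Multiset (PT X)} :
    SemF {T} F ↔ ∃ q, CutR T q ∧ flatP q = F := by
  constructor
  · rintro ⟨Gs, hrel, hF⟩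
    have : ({T} : Multiset (PT X)) = T ::ₘ 0 := rfl
    rw [this, Multiset.rel_cons_left] at hrel
    obtain ⟨g, Gs1, hPP, hrel1, hGs⟩ := hrel
    rw [Multiset.rel_zero_left] at hrel1
    subst hrel1
    obtain ⟨q, hq, hflat⟩ := hPP
    exact ⟨q, hq, by rw [hflat, hF, hGs]; simp⟩
  · rintro ⟨q, hq, hflat⟩
    exact ⟨{flatP q}, Multiset.Rel.cons ⟨q, hq, rfl⟩ Multiset.Rel.zero,
      by rw [← hflat]; simp⟩

lemma semF_msteps {F G : Multiset (PT X)} (h : SemF F G) : MStepsR F G := by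
  obtain ⟨Gs, hrel, hG⟩ := h
  subst hG
  induction hrel with
  | zero => exact Relation.ReflTransGen.refl
  | @cons t g F₀ Gs₀ hPP hrel ih =>
      obtain ⟨q, hq, hflat⟩ := hPP
      have h1 : MStepsR {t} g := by rw [← hflat]; exact cut_msteps hq
      have := msteps_pair h1 ih
      rw [Multiset.sum_cons]
      rwa [Multiset.singleton_add] at this

lemma forest_trans {T : PT X} {F G : Multiset (PT X)} (hnd : (labels T).Nodup)
    (hF : ForestOf F {T}) (hG : ForestOf G F) : ForestOf G {T} := by
  obtain ⟨qF, hqF, hqFflat⟩ := semF_singleton.1 (semF_of_forestOf hF)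
  have h1 : MStepsR {T} F := by rw [← hqFflat]; exact cut_msteps hqF
  have h2 : MStepsR F G := semF_msteps (semF_of_forestOf hG)
  obtain ⟨q, hq, hflat⟩ := msteps_cut_aux (szP T) T G le_rfl (h1.trans h2)
  exact forestOf_of_semF (by simpa using hnd) (semF_singleton.2 ⟨q, hq, hflat⟩)

lemma mem_msum {g : PT X} {Gs : Multiset (Multiset (PT X))} (h : g ∈ Gs.sum) :
    ∃ gs ∈ Gs, g ∈ gs := by
  induction Gs using Multiset.induction_on with
  | empty => simp at h
  | cons a s ih =>
      rw [Multiset.sum_cons] at h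
      rcases Multiset.mem_add.1 h with h | h
      · exact ⟨a, Multiset.mem_cons_self _ _, h⟩
      · obtain ⟨gs, h1, h2⟩ := ih h
        exact ⟨gs, Multiset.mem_cons_of_mem h1, h2⟩

lemma rel_exists_left {r : PT X → Multiset (PT X) → Prop} {F : Multiset (PT X)}
    {Gs : Multiset (Multiset (PT X))} (h : Multiset.Rel r F Gs) {b : Multiset (PT X)}
    (hb : b ∈ Gs) : ∃ a ∈ F, r a b := by
  induction h with
  | zero => simp at hb
  | @cons a b' as bs hr hrel ih =>
      rcases Multiset.mem_cons.1 hb with rfl | hb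
      · exact ⟨a, Multiset.mem_cons_self _ _, hr⟩
      · obtain ⟨a', h1, h2⟩ := ih hb
        exact ⟨a', Multiset.mem_cons_of_mem h1, h2⟩

lemma forest_refines {F G : Multiset (PT X)} (h : ForestOf G F) :
    ∀ g ∈ G, ∃ D ∈ F, labels g ⊆ labels D := by
  obtain ⟨Gs, hrel, hG⟩ := semF_of_forestOf h
  subst hG
  intro g hg
  obtain ⟨gs, hgs, hggs⟩ := mem_msum hg
  obtain ⟨D, hD, q, hq, hflat⟩ := rel_exists_left hrel hgs
  exact ⟨D, hD, piece_subset hq (hflat ▸ hggs)⟩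

end AuxAF7
/-- Let `F₁` be the union of trees `Ṫ₁, …, Ṫ_k` and `F₂` the union of
forests `Ḟ₁, …, Ḟ_k` such that `Ṫ_i` and `Ḟ_i` have the same label set for
each `i`.  Then a forest of `F₂` is an agreement forest of `T₁` and `T₂`
if and only if it is an agreement forest of `F₁` and `F₂`. -/
theorem forest_ecut {X : Type} [DecidableEq X] (T₁ T₂ : PT X)
    (hnd₁ : (labels T₁).Nodup) (hnd₂ : (labels T₂).Nodup)
    (hX : labs T₁ = labs T₂)
    (k : ℕ) (Td : Fin k → PT X) (Fd : Fin k → Multiset (PT X))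
    (F₁ F₂ : Multiset (PT X))
    (hF₁def : F₁ = ∑ i : Fin k, ({Td i} : Multiset (PT X)))
    (hF₂def : F₂ = ∑ i : Fin k, Fd i)
    (hlab : ∀ i, labelsF (Fd i) = labels (Td i))
    (hF₁ : ForestOf F₁ {T₁}) (hF₂ : ForestOf F₂ {T₂}) :
    ∀ G : Multiset (PT X), ForestOf G F₂ →
      (IsAF G T₁ T₂ ↔ (ForestOf G F₁ ∧ ForestOf G F₂)) := by
  intro G hG
  obtain ⟨q₁, hq₁, hq₁f⟩ := semF_singleton.1 (semF_of_forestOf hF₁)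
  have hlabF₁ : labelsF F₁ = labels T₁ := by rw [← hq₁f]; exact cut_labels hq₁
  have hndF₁ : (labelsF F₁).Nodup := by rw [hlabF₁]; exact hnd₁
  constructor
  · rintro ⟨h1, _h2⟩
    refine ⟨?_, hG⟩
    have href : ∀ g ∈ G, ∃ D ∈ F₁, labels g ⊆ labels D := by
      intro g hg
      obtain ⟨D, hD, hsub⟩ := forest_refines hG g hg
      rw [hF₂def] at hD
      obtain ⟨i, _, hi⟩ := Multiset.mem_sum.1 hD
      refine ⟨Td i, by
        rw [hF₁def]
        exact Multiset.mem_sum.2 ⟨i, Finset.mem_univ i, Multiset.mem_singleton_self _⟩, ?_⟩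
      intro x hx
      have : x ∈ labelsF (Fd i) := Multiset.mem_of_le (mem_labelsF_le hi) (hsub hx)
      rwa [hlab i] at this
    have hms : MStepsR {T₁} F₁ := by rw [← hq₁f]; exact cut_msteps hq₁
    exact forestOf_of_semF hndF₁
      (msteps_transport href hms (by simpa using hnd₁) (semF_of_forestOf h1))
  · rintro ⟨h1, h2⟩
    exact ⟨forest_trans hnd₁ hF₁ h1, forest_trans hnd₂ hF₂ h2⟩

end Phylo
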